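/- Let m ≥ 1 and let E, F ⊆ ℝ^m. The following are equivalent: (i) E is a conical limit set, F is closed in ℝ^m, E ⊆ F, and the interior of F is contained in the closure of E; (ii) there exists a sequence of points (t_n, v_n) in the upper half-space H with t_n → 0 as n → ∞ such that F equals the set of subsequential limits in ℝ^m of the sequence (v_n), and E equals the conical limit set of the set {(t_n, v_n) : n ∈ ℕ}. -/

import Mathlib

open Filter Topology

/-- The open upper half-space over a normed space `V`: pairs `(t, v)` with `t > 0`. -/
def upperHalf (V : Type*) [NormedAddCommGroup V] : Set (ℝ × V) := {p | 0 < p.1}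

/-- The conical limit set of `E ⊆ ℝ × V`: points `x` for which there are `C > 0` and a
sequence `(t_n, v_n)` in `E` with `t_n → 0`, `v_n → x` and `‖v_n - x‖ ≤ C * t_n`. -/
def conicalLimitSet {V : Type*} [NormedAddCommGroup V] (E : Set (ℝ × V)) : Set V :=
  {x | ∃ C > 0, ∃ w : ℕ → ℝ × V, (∀ n, w n ∈ E) ∧
    Tendsto (fun n => (w n).1) atTop (𝓝 (0 : ℝ)) ∧
    Tendsto (fun n => (w n).2) atTop (𝓝 x) ∧
    ∀ n, ‖(w n).2 - x‖ ≤ C * (w n).1}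

/-- `X ⊆ V` is a conical limit set if it is the conical limit set of some subset of the
upper half-space. -/
def IsConicalLimitSet {V : Type*} [NormedAddCommGroup V] (X : Set V) : Prop :=
  ∃ E ⊆ upperHalf V, conicalLimitSet E = X

section Helpers

variable {V : Type*} [NormedAddCommGroup V]

private lemma freq_char (w : ℕ → ℝ × V) (x : V) :
    (∃ φ : ℕ → ℕ, StrictMono φ ∧ Tendsto (fun k => (w (φ k)).2) atTop (𝓝 x)) ↔
      ∀ ε > 0, ∀ N : ℕ, ∃ n, N ≤ n ∧ dist ((w n).2) x < ε := by
  constructor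
  · rintro ⟨φ, hφ, hten⟩ ε hε N
    obtain ⟨K, hK⟩ := Metric.tendsto_atTop.mp hten ε hε
    exact ⟨φ (max K N), le_trans (le_max_right K N) hφ.le_apply, hK _ (le_max_left K N)⟩
  · intro h
    have hstep : ∀ k N : ℕ, ∃ n, N ≤ n ∧ dist ((w n).2) x < 1 / (k + 1) := by
      intro k N; exact h (1 / (k + 1)) (by positivity) N
    choose f hf1 hf2 using hstep
    let φ : ℕ → ℕ := fun k => Nat.rec (f 0 0) (fun k ih => f (k + 1) (ih + 1)) k
    have hφs : ∀ k, φ (k + 1) = f (k + 1) (φ k + 1) := fun k => rfl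
    have hmono : StrictMono φ := by
      apply strictMono_nat_of_lt_succ
      intro k
      rw [hφs k]
      exact lt_of_lt_of_le (Nat.lt_succ_self _) (hf1 (k + 1) (φ k + 1))
    refine ⟨φ, hmono, ?_⟩
    rw [tendsto_iff_dist_tendsto_zero]
    apply squeeze_zero (g := fun k : ℕ => 1 / ((k : ℝ) + 1)) (fun k => dist_nonneg) ?_
      tendsto_one_div_add_atTop_nhds_zero_nat
    intro k
    cases k with
    | zero => simpa [show φ 0 = f 0 0 from rfl] using (hf2 0 0).le
    | succ k => rw [hφs k]; exact (hf2 (k + 1) (φ k + 1)).le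

private lemma finite_values_false (q : ℕ → ℝ × V) (S : Set (ℝ × V)) (hfin : S.Finite)
    (hmem : ∀ l, q l ∈ S) (hpos : ∀ p ∈ S, 0 < p.1)
    (ht : Tendsto (fun l => (q l).1) atTop (𝓝 0)) : False := by
  obtain ⟨p₀, hp₀S, hp₀min⟩ := Set.exists_min_image S (fun p => p.1) hfin ⟨q 0, hmem 0⟩
  obtain ⟨L, hL⟩ := Metric.tendsto_atTop.mp ht p₀.1 (hpos _ hp₀S)
  have h1 := hL L le_rfl
  rw [Real.dist_eq, sub_zero] at h1
  exact absurd (hp₀min _ (hmem L)) (by nlinarith [le_abs_self (q L).1])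

private lemma pow_small {δ : ℝ} (hδ : 0 < δ) : ∃ K : ℕ, ∀ k ≥ K, ((1 : ℝ) / 2) ^ k < δ := by
  obtain ⟨K, hK⟩ := Metric.tendsto_atTop.mp
    (tendsto_pow_atTop_nhds_zero_of_lt_one (by norm_num) (by norm_num : (1 : ℝ) / 2 < 1)) δ hδ
  refine ⟨K, fun k hk => ?_⟩
  have := hK k hk
  rwa [Real.dist_eq, sub_zero, abs_of_pos (by positivity)] at this

private lemma pair_le_sq (j i : ℕ) : Nat.pair j i ≤ (j + i + 1) * (j + i + 1) := by
  rw [Nat.pair]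
  split <;> nlinarith

/-- From a conical-type witness taking values in the range of `w` (with positive heights
tending to `0`), the limit is approached frequently by the `w`-sequence itself. -/
private lemma witness_freq (w : ℕ → ℝ × V) (h1 : ∀ n, 0 < (w n).1) (x : V)
    (q : ℕ → ℝ × V) (hq : ∀ l, q l ∈ Set.range w)
    (hqt : Tendsto (fun l => (q l).1) atTop (𝓝 0))
    (hqv : Tendsto (fun l => (q l).2) atTop (𝓝 x)) :
    ∀ ε > 0, ∀ N : ℕ, ∃ n, N ≤ n ∧ dist ((w n).2) x < ε := by
  intro ε hε N
  have hne : (Finset.range (N + 1)).Nonempty := ⟨0, by simp⟩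
  set τ := (Finset.range (N + 1)).inf' hne (fun n => (w n).1) with hτ
  have hτpos : 0 < τ := by
    rw [hτ, Finset.lt_inf'_iff]
    exact fun i _ => h1 i
  obtain ⟨L1, hL1⟩ := Metric.tendsto_atTop.mp hqt τ hτpos
  obtain ⟨L2, hL2⟩ := Metric.tendsto_atTop.mp hqv ε hε
  obtain ⟨n, hn⟩ := hq (max L1 L2)
  have htl : (q (max L1 L2)).1 < τ := by
    have := hL1 (max L1 L2) (le_max_left _ _)
    rw [Real.dist_eq, sub_zero] at this
    exact lt_of_le_of_lt (le_abs_self _) this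
  have hNn : N < n := by
    by_contra hc
    push_neg at hc
    have h2 : τ ≤ (w n).1 := Finset.inf'_le _ (by simp [Nat.lt_succ_iff]; omega)
    rw [hn] at h2
    linarith
  refine ⟨n, by omega, ?_⟩
  have := hL2 (max L1 L2) (le_max_right _ _)
  rwa [← hn] at this

end Helpers


section Construction

variable {V : Type*} [NormedAddCommGroup V]

/-- dyadic scale regions of the upper half space used to discretise `E₀`. -/
private def rSet (E₀ : Set (ℝ × V)) (E : Set V) (j : ℕ) : Set (ℝ × V) :=
  {p | p ∈ E₀ ∧ ((1 : ℝ) / 2) ^ (j + 1) ≤ p.1 ∧ p.1 < ((1 : ℝ) / 2) ^ j ∧ ‖p.2‖ ≤ (j : ℝ) ∧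
    ∃ x ∈ E, ‖p.2 - x‖ ≤ Real.sqrt p.1}

open Classical in
private noncomputable def lev (t : ℝ) : ℕ :=
  if h : ∃ k : ℕ, ((1 : ℝ) / 2) ^ (k + 1) ≤ t then Nat.find h else 0

private lemma lev_ex {t : ℝ} (ht : 0 < t) : ∃ k : ℕ, ((1 : ℝ) / 2) ^ (k + 1) ≤ t := by
  obtain ⟨K, hK⟩ := pow_small ht
  exact ⟨K, le_of_lt (by simpa using hK (K + 1) (by omega))⟩

private lemma lev_le {t : ℝ} (ht : 0 < t) : ((1 : ℝ) / 2) ^ (lev t + 1) ≤ t := by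
  classical
  rw [lev, dif_pos (lev_ex ht)]
  exact Nat.find_spec (lev_ex ht)

private lemma lev_gt {t : ℝ} (ht : 0 < t) (h1 : t < 1) : t < ((1 : ℝ) / 2) ^ (lev t) := by
  classical
  rw [lev, dif_pos (lev_ex ht)]
  rcases Nat.eq_zero_or_pos (Nat.find (lev_ex ht)) with h | h
  · rw [h]; simpa using h1
  · obtain ⟨k, hk⟩ := Nat.exists_eq_succ_of_ne_zero (Nat.pos_iff_ne_zero.mp h)
    rw [hk]
    have := Nat.find_min (lev_ex ht) (m := k) (by omega)
    push_neg at this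
    simpa using this

private lemma lev_large {t : ℝ} {K : ℕ} (ht : 0 < t) (h : t < ((1 : ℝ) / 2) ^ (K + 1)) :
    K < lev t := by
  by_contra hc
  push_neg at hc
  have h2 : ((1 : ℝ) / 2) ^ (K + 1) ≤ ((1 : ℝ) / 2) ^ (lev t + 1) :=
    pow_le_pow_of_le_one (by norm_num) (by norm_num) (by omega)
  have := lev_le ht
  linarith

private noncomputable def bSeq (Ls : ℕ → List (ℝ × V)) (u : V) (r : ℕ) : ℝ × V :=
  if (Nat.unpair r).2 < (Ls (Nat.unpair r).1).length then
    (Ls (Nat.unpair r).1).getD (Nat.unpair r).2 (1, u)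
  else ((1 : ℝ) / (r + 1), ((Nat.unpair r).1 + (Nat.unpair r).2 + 1) • u)

open Classical in
private noncomputable def fSeq (d : ℕ → V) (F : Set V) (u : V) (r : ℕ) : ℝ × V :=
  if h : ∃ z : V, z ∈ Metric.closedBall (d (Nat.unpair r).1) (((1 : ℝ) / 2) ^ r) ∧ z ∉ F then
    (min (((1 : ℝ) / 2) ^ r) (((1 : ℝ) / 4) ^ r * Metric.infDist h.choose F), h.choose)
  else (((1 : ℝ) / 2) ^ r, (r + 1) • u)

private noncomputable def wSeq (Ls : ℕ → List (ℝ × V)) (d : ℕ → V) (F : Set V) (u : V)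
    (n : ℕ) : ℝ × V :=
  if n % 2 = 0 then bSeq Ls u (n / 2) else fSeq d F u (n / 2)

private lemma wSeq_even (Ls : ℕ → List (ℝ × V)) (d : ℕ → V) (F : Set V) (u : V) (r : ℕ) :
    wSeq Ls d F u (2 * r) = bSeq Ls u r := by
  have h1 : (2 * r) % 2 = 0 := by omega
  have h2 : (2 * r) / 2 = r := by omega
  rw [wSeq, if_pos h1, h2]

private lemma wSeq_odd (Ls : ℕ → List (ℝ × V)) (d : ℕ → V) (F : Set V) (u : V) (r : ℕ) :
    wSeq Ls d F u (2 * r + 1) = fSeq d F u r := by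
  have h1 : ¬((2 * r + 1) % 2 = 0) := by omega
  have h2 : (2 * r + 1) / 2 = r := by omega
  rw [wSeq, if_neg h1, h2]

end Construction

set_option maxHeartbeats 4000000 in
/-- `E` and `F` are respectively the conical limit set and the set of subsequential limits
of a standard sequence in the upper half-space iff `E` is a conical limit set, `F` is
closed, `E ⊆ F`, and the interior of `F` is contained in the closure of `E`. -/
theorem conicalLimitSet_and_limitSet_characterisation (m : ℕ) (hm : 1 ≤ m)
    (E F : Set (EuclideanSpace ℝ (Fin m))) :
    (IsConicalLimitSet E ∧ IsClosed F ∧ E ⊆ F ∧ interior F ⊆ closure E) ↔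
    (∃ w : ℕ → ℝ × EuclideanSpace ℝ (Fin m),
      (∀ n, 0 < (w n).1) ∧
      Tendsto (fun n => (w n).1) atTop (𝓝 (0 : ℝ)) ∧
      F = {x | ∃ φ : ℕ → ℕ, StrictMono φ ∧
        Tendsto (fun k => (w (φ k)).2) atTop (𝓝 x)} ∧
      E = conicalLimitSet (Set.range w)) := by
  classical
  constructor
  · rintro ⟨⟨E₀, hE₀H, hE₀⟩, hFc, hEF, hint⟩
    have hm0 : 0 < m := hm
    set u : EuclideanSpace ℝ (Fin m) := EuclideanSpace.single (⟨0, hm0⟩ : Fin m) (1 : ℝ)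
      with hu_def
    have hu : ‖u‖ = 1 := by rw [hu_def, EuclideanSpace.norm_single]; norm_num
    have hnseq : ∀ c : ℕ, ‖(c • u : EuclideanSpace ℝ (Fin m))‖ = (c : ℝ) := by
      intro c
      rw [← Nat.cast_smul_eq_nsmul ℝ, norm_smul, hu, mul_one, Real.norm_natCast]
    rcases F.eq_empty_or_nonempty with hFe | hFne
    · -- `F` is empty, hence so is `E`; a junk sequence escaping to infinity works.
      have hEe : E = ∅ := by rw [hFe] at hEF; exact Set.subset_empty_iff.mp hEF
      refine ⟨fun n => ((1 : ℝ) / (n + 1), (n + 1) • u), fun n => by positivity, ?_, ?_, ?_⟩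
      · simpa using tendsto_one_div_add_atTop_nhds_zero_nat (𝕜 := ℝ)
      · rw [hFe]
        ext x
        simp only [Set.mem_empty_iff_false, Set.mem_setOf_eq, false_iff]
        rintro ⟨φ, hφ, hten⟩
        obtain ⟨K, hK⟩ := Metric.tendsto_atTop.mp hten 1 one_pos
        set k := K + Nat.ceil ‖x‖ + 1 with hk
        have h1 := hK k (by omega)
        have h2 : ((φ k + 1 : ℕ) : ℝ) - ‖x‖ ≤ dist (((φ k + 1) • u : EuclideanSpace ℝ (Fin m))) x := by
          rw [dist_eq_norm]
          have h3 := norm_sub_norm_le ((φ k + 1) • u : EuclideanSpace ℝ (Fin m)) x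
          rw [hnseq] at h3
          linarith
        have h4 : k ≤ φ k := hφ.le_apply
        have h5 : ‖x‖ ≤ (Nat.ceil ‖x‖ : ℝ) := Nat.le_ceil _
        have h6 : ((k : ℕ) : ℝ) = (K : ℝ) + (Nat.ceil ‖x‖ : ℝ) + 1 := by
          rw [hk]; push_cast; ring
        have h7 : ((k : ℕ) : ℝ) ≤ ((φ k + 1 : ℕ) : ℝ) := by exact_mod_cast by omega
        have h8 : (0 : ℝ) ≤ (K : ℝ) := Nat.cast_nonneg _
        linarith
      · rw [hEe]
        symm
        rw [Set.eq_empty_iff_forall_notMem]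
        rintro x ⟨C, hC, q, hqm, hqt, hqv, hqb⟩
        obtain ⟨L0, hL0⟩ := Metric.tendsto_atTop.mp hqv 1 one_pos
        apply finite_values_false (fun l => q (l + L0))
          ((fun n : ℕ => (((1 : ℝ) / (n + 1), (n + 1) • u) : ℝ × EuclideanSpace ℝ (Fin m))) ''
            (Set.Iic (Nat.ceil ‖x‖))) (((Set.finite_Iic _)).image _)
        · intro l
          obtain ⟨n, hn⟩ := hqm (l + L0)
          refine ⟨n, ?_, hn⟩
          simp only [Set.mem_Iic]
          have hd := hL0 (l + L0) (by omega)
          rw [dist_eq_norm] at hd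
          have h2 := norm_sub_norm_le (q (l + L0)).2 x
          have h3 : ‖(q (l + L0)).2‖ = ((n + 1 : ℕ) : ℝ) := by
            rw [← hn]; exact hnseq _
          have h5 : ‖x‖ ≤ (Nat.ceil ‖x‖ : ℝ) := Nat.le_ceil _
          have h6 : ((n : ℕ) : ℝ) < (Nat.ceil ‖x‖ : ℝ) + 1 := by push_cast at h3 ⊢; linarith
          have h7 : n < Nat.ceil ‖x‖ + 1 := by exact_mod_cast h6
          omega
        · rintro p ⟨n, -, rfl⟩
          positivity
        · exact hqt.comp (tendsto_add_atTop_nat L0)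
    · -- main case: `F` nonempty
      have hFsub : Nonempty F := hFne.to_subtype
      set d : ℕ → EuclideanSpace ℝ (Fin m) := fun j => ((TopologicalSpace.denseSeq F j : F) : _)
        with hd_def
      have hdF : ∀ j, d j ∈ F := fun j => (TopologicalSpace.denseSeq F j).2
      have hdense : ∀ x ∈ F, ∀ r > 0, ∃ j, dist x (d j) < r := by
        intro x hx r hr
        obtain ⟨j, hj⟩ := Metric.denseRange_iff.mp
          (TopologicalSpace.denseRange_denseSeq F) ⟨x, hx⟩ r hr
        refine ⟨j, ?_⟩
        rw [Subtype.dist_eq] at hj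
        simpa [hd_def] using hj
      have hnet : ∀ j : ℕ, ∃ S : Set (ℝ × EuclideanSpace ℝ (Fin m)), S ⊆ rSet E₀ E j ∧
          S.Finite ∧ ∀ p ∈ rSet E₀ E j, ∃ a ∈ S, dist p a < ((1 : ℝ) / 2) ^ (j + 3) := by
        intro j
        have hbd : rSet E₀ E j ⊆
            Metric.closedBall (0 : ℝ × EuclideanSpace ℝ (Fin m)) ((j : ℝ) + 1) := by
          rintro p ⟨-, h1, h2, h3, -⟩
          rw [Metric.mem_closedBall, Prod.dist_eq]
          simp only [Prod.fst_zero, Prod.snd_zero]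
          have h4 : (0 : ℝ) < ((1 : ℝ) / 2) ^ (j + 1) := by positivity
          have h5 : ((1 : ℝ) / 2) ^ j ≤ 1 := pow_le_one₀ (by norm_num) (by norm_num)
          have hp1 : dist p.1 0 ≤ 1 := by
            rw [Real.dist_eq, sub_zero, abs_of_pos (by linarith)]
            linarith
          have hp2 : dist p.2 0 ≤ (j : ℝ) := by rwa [dist_zero_right]
          have h6 : (0 : ℝ) ≤ (j : ℝ) := Nat.cast_nonneg _
          exact sup_le (by linarith) (by linarith)
        have hTB : TotallyBounded (rSet E₀ E j) :=
          TotallyBounded.subset hbd (isCompact_closedBall 0 _).totallyBounded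
        obtain ⟨S, hS1, hS2, hS3⟩ :=
          Metric.finite_approx_of_totallyBounded hTB (((1 : ℝ) / 2) ^ (j + 3)) (by positivity)
        refine ⟨S, hS1, hS2, fun p hp => ?_⟩
        obtain ⟨a, haS, hab⟩ := Set.mem_iUnion₂.mp (hS3 hp)
        exact ⟨a, haS, by rwa [Metric.mem_ball] at hab⟩
      choose Sset hSsub hSfin hScov using hnet
      set Ls : ℕ → List (ℝ × EuclideanSpace ℝ (Fin m)) := fun j => (hSfin j).toFinset.toList
        with hLs_def
      have hLsmem : ∀ (j : ℕ) (a : ℝ × EuclideanSpace ℝ (Fin m)), a ∈ Ls j ↔ a ∈ Sset j := by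
        intro j a
        rw [hLs_def]
        simp [Finset.mem_toList, Set.Finite.mem_toFinset]
      set W := wSeq Ls d F u with hW_def
      -- branch description lemmas
      have hBreal : ∀ (r : ℕ) (h : (Nat.unpair r).2 < (Ls (Nat.unpair r).1).length),
          bSeq Ls u r ∈ Sset (Nat.unpair r).1 ∧ bSeq Ls u r ∈ rSet E₀ E (Nat.unpair r).1 := by
        intro r h
        have h1 : bSeq Ls u r = (Ls (Nat.unpair r).1).get ⟨(Nat.unpair r).2, h⟩ := by
          rw [bSeq, if_pos h]
          exact List.getD_eq_getElem _ _ h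
        have h2 : bSeq Ls u r ∈ Ls (Nat.unpair r).1 := by rw [h1]; exact List.get_mem _ _
        have h3 := (hLsmem _ _).mp h2
        exact ⟨h3, hSsub _ h3⟩
      have hBjunk : ∀ r : ℕ, ¬((Nat.unpair r).2 < (Ls (Nat.unpair r).1).length) →
          bSeq Ls u r = ((1 : ℝ) / (r + 1), ((Nat.unpair r).1 + (Nat.unpair r).2 + 1) • u) := by
        intro r h
        rw [bSeq, if_neg h]
      have hFspoke : ∀ (r : ℕ)
          (h : ∃ z, z ∈ Metric.closedBall (d (Nat.unpair r).1) (((1 : ℝ) / 2) ^ r) ∧ z ∉ F),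
          fSeq d F u r = (min (((1 : ℝ) / 2) ^ r)
            (((1 : ℝ) / 4) ^ r * Metric.infDist h.choose F), h.choose) := by
        intro r h
        rw [fSeq, dif_pos h]
      have hFjunk : ∀ r : ℕ,
          ¬(∃ z, z ∈ Metric.closedBall (d (Nat.unpair r).1) (((1 : ℝ) / 2) ^ r) ∧ z ∉ F) →
          fSeq d F u r = (((1 : ℝ) / 2) ^ r, (r + 1) • u) := by
        intro r h
        rw [fSeq, dif_neg h]
      -- positivity of heights
      have hinfpos : ∀ z : EuclideanSpace ℝ (Fin m), z ∉ F → 0 < Metric.infDist z F := by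
        intro z hz
        rcases lt_or_eq_of_le (Metric.infDist_nonneg (x := z) (s := F)) with h | h
        · exact h
        · exact absurd ((IsClosed.mem_iff_infDist_zero hFc hFne).mpr h.symm) hz
      have hWpos : ∀ n, 0 < (W n).1 := by
        intro n
        rcases Nat.even_or_odd n with ⟨r, hr⟩ | ⟨r, hr⟩
        · have hn2 : n = 2 * r := by omega
          rw [hn2, hW_def, wSeq_even]
          by_cases h : (Nat.unpair r).2 < (Ls (Nat.unpair r).1).length
          · have h2 := (hBreal r h).2.2.1
            have h3 : (0 : ℝ) < ((1 : ℝ) / 2) ^ ((Nat.unpair r).1 + 1) := by positivity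
            linarith
          · rw [hBjunk r h]
            positivity
        · rw [hr, hW_def, wSeq_odd]
          by_cases h : ∃ z, z ∈ Metric.closedBall (d (Nat.unpair r).1) (((1 : ℝ) / 2) ^ r) ∧ z ∉ F
          · rw [hFspoke r h]
            have h1 := hinfpos h.choose h.choose_spec.2
            have h2 : (0 : ℝ) < ((1 : ℝ) / 2) ^ r := by positivity
            have h3 : (0 : ℝ) < ((1 : ℝ) / 4) ^ r := by positivity
            exact lt_min h2 (by positivity)
          · rw [hFjunk r h]
            positivity
      -- the heights tend to zero
      have hWt : Tendsto (fun n => (W n).1) atTop (𝓝 (0 : ℝ)) := by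
        rw [Metric.tendsto_atTop]
        intro ε hε
        obtain ⟨K, hK⟩ := pow_small hε
        set M := (Finset.range K).sup (fun j => (Ls j).length) with hM
        refine ⟨2 * ((K + M + 1) * (K + M + 1)) + 2 * (Nat.ceil (1 / ε)) + 2 * K + 4,
          fun n hn => ?_⟩
        have habs : (W n).1 < ε → dist ((W n).1) 0 < ε := by
          intro h2
          rw [Real.dist_eq, sub_zero, abs_of_pos (hWpos n)]
          exact h2
        apply habs
        rcases Nat.even_or_odd n with ⟨r, hr⟩ | ⟨r, hr⟩
        · have hn2 : n = 2 * r := by omega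
          rw [hn2, hW_def, wSeq_even]
          by_cases h : (Nat.unpair r).2 < (Ls (Nat.unpair r).1).length
          · have hjK : K ≤ (Nat.unpair r).1 := by
              by_contra hc
              push_neg at hc
              have hi : (Nat.unpair r).2 < M + 1 := by
                have h5 : (Ls (Nat.unpair r).1).length ≤ M :=
                  Finset.le_sup (f := fun j => (Ls j).length) (Finset.mem_range.mpr hc)
                omega
              have h6 := pair_le_sq (Nat.unpair r).1 (Nat.unpair r).2
              rw [Nat.pair_unpair] at h6
              have h7 : r ≤ (K + M + 1) * (K + M + 1) :=
                le_trans h6 (Nat.mul_le_mul (by omega) (by omega))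
              omega
            have h2 := (hBreal r h).2.2.2.1
            calc (bSeq Ls u r).1 < ((1 : ℝ) / 2) ^ (Nat.unpair r).1 := h2
              _ < ε := hK _ hjK
          · rw [hBjunk r h]
            have hr2 : Nat.ceil (1 / ε) + 1 ≤ r := by omega
            have h3 : (1 : ℝ) / ε ≤ (Nat.ceil (1 / ε) : ℝ) := Nat.le_ceil _
            have h4 : ((Nat.ceil (1 / ε) : ℕ) : ℝ) + 1 ≤ (r : ℝ) := by exact_mod_cast hr2
            have h5 : (1 : ℝ) / ε < (r : ℝ) + 1 := by linarith
            have hrpos : (0 : ℝ) < (r : ℝ) + 1 := by positivity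
            show (1 : ℝ) / ((r : ℝ) + 1) < ε
            rw [div_lt_iff₀ hrpos]
            have h7 := (div_lt_iff₀ hε).mp h5
            nlinarith
        · rw [hr, hW_def, wSeq_odd]
          have hrK : K ≤ r := by omega
          have hle : (fSeq d F u r).1 ≤ ((1 : ℝ) / 2) ^ r := by
            by_cases h : ∃ z,
                z ∈ Metric.closedBall (d (Nat.unpair r).1) (((1 : ℝ) / 2) ^ r) ∧ z ∉ F
            · rw [hFspoke r h]; exact min_le_left _ _
            · rw [hFjunk r h]
          exact lt_of_le_of_lt hle (hK r hrK)
      -- every element of a net occurs in the sequence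
      have hWmem_of_S : ∀ (j : ℕ) (a : ℝ × EuclideanSpace ℝ (Fin m)), a ∈ Sset j →
          ∃ n, W n = a := by
        intro j a ha
        have h1 : a ∈ Ls j := (hLsmem j a).mpr ha
        obtain ⟨⟨i, hi⟩, hget⟩ := List.mem_iff_get.mp h1
        refine ⟨2 * Nat.pair j i, ?_⟩
        rw [hW_def, wSeq_even, bSeq]
        simp only [Nat.unpair_pair]
        rw [if_pos hi, List.getD_eq_getElem _ _ hi]
        exact hget
      -- E is contained in the conical limit set of the range
      have hEsub : E ⊆ conicalLimitSet (Set.range W) := by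
        intro x hx
        have hxE : x ∈ E := hx
        rw [← hE₀] at hx
        obtain ⟨C, hC, q, hqm, hqt, hqv, hqb⟩ := hx
        have hqpos : ∀ n, 0 < (q n).1 := fun n => hE₀H (hqm n)
        set K₀ := Nat.ceil (‖x‖ + C) with hK₀
        obtain ⟨N1, hN1⟩ := Metric.tendsto_atTop.mp hqt
          (min (min 1 (((1 : ℝ) / 2) ^ (K₀ + 1))) (1 / (C + 1) ^ 2)) (by positivity)
        have hsm : ∀ n, N1 ≤ n →
            (q n).1 < min (min 1 (((1 : ℝ) / 2) ^ (K₀ + 1))) (1 / (C + 1) ^ 2) := by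
          intro n hn
          have := hN1 n hn
          rwa [Real.dist_eq, sub_zero, abs_of_pos (hqpos n)] at this
        have hmemR : ∀ n, N1 ≤ n → q n ∈ rSet E₀ E (lev (q n).1) := by
          intro n hn
          have ht := hqpos n
          have hb := hsm n hn
          have ht1 : (q n).1 < 1 :=
            lt_of_lt_of_le hb (le_trans (min_le_left _ _) (min_le_left _ _))
          have ht2 : (q n).1 < ((1 : ℝ) / 2) ^ (K₀ + 1) :=
            lt_of_lt_of_le hb (le_trans (min_le_left _ _) (min_le_right _ _))
          have ht3 : (q n).1 ≤ 1 / (C + 1) ^ 2 := le_of_lt (lt_of_lt_of_le hb (min_le_right _ _))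
          have hlev1 := lev_le ht
          have hlev2 := lev_gt ht ht1
          have hlev3 := lev_large ht ht2
          refine ⟨hqm n, hlev1, hlev2, ?_, x, hxE, ?_⟩
          · have h4 : ‖(q n).2‖ ≤ ‖x‖ + C * (q n).1 := by
              calc ‖(q n).2‖ = ‖((q n).2 - x) + x‖ := by rw [sub_add_cancel]
                _ ≤ ‖(q n).2 - x‖ + ‖x‖ := norm_add_le _ _
                _ ≤ C * (q n).1 + ‖x‖ := by linarith [hqb n]
                _ = ‖x‖ + C * (q n).1 := by ring
            have h6 : C * (q n).1 ≤ C := by nlinarith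
            have h7 : (‖x‖ + C) ≤ (K₀ : ℝ) := Nat.le_ceil _
            have h8 : (K₀ : ℝ) ≤ (lev (q n).1 : ℝ) := by exact_mod_cast le_of_lt hlev3
            linarith
          · have h5 := hqb n
            have h9 : Real.sqrt (q n).1 ≤ 1 / (C + 1) := by
              have h10 : (q n).1 ≤ (1 / (C + 1)) ^ 2 := by
                rw [div_pow, one_pow]
                exact ht3
              calc Real.sqrt (q n).1 ≤ Real.sqrt ((1 / (C + 1)) ^ 2) := Real.sqrt_le_sqrt h10
                _ = 1 / (C + 1) := Real.sqrt_sq (by positivity)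
            have h10 := Real.mul_self_sqrt (le_of_lt ht)
            have h11 := Real.sqrt_nonneg (q n).1
            have h12 : C * Real.sqrt (q n).1 ≤ C * (1 / (C + 1)) :=
              mul_le_mul_of_nonneg_left h9 hC.le
            have h13 : C * (1 / (C + 1)) ≤ 1 := by
              rw [mul_one_div, div_le_one (by positivity)]
              linarith
            have h14 : C * Real.sqrt (q n).1 ≤ 1 := le_trans h12 h13
            have h15 : (C * Real.sqrt (q n).1) * Real.sqrt (q n).1 ≤ 1 * Real.sqrt (q n).1 :=
              mul_le_mul_of_nonneg_right h14 h11
            have hsq : C * (q n).1 ≤ Real.sqrt (q n).1 := by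
              calc C * (q n).1 = (C * Real.sqrt (q n).1) * Real.sqrt (q n).1 := by
                    rw [mul_assoc, h10]
                _ ≤ 1 * Real.sqrt (q n).1 := h15
                _ = Real.sqrt (q n).1 := one_mul _
            linarith
        have hA : ∀ n : ℕ, ∃ a, a ∈ Sset (lev (q (n + N1)).1) ∧
            dist (q (n + N1)) a < ((1 : ℝ) / 2) ^ (lev (q (n + N1)).1 + 3) :=
          fun n => hScov _ _ (hmemR (n + N1) (by omega))
        choose A hA1 hA2 using hA
        have hA3 : ∀ n, dist (q (n + N1)) (A n) ≤ (q (n + N1)).1 / 4 := by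
          intro n
          have h1 := hA2 n
          have h2 := lev_le (hqpos (n + N1))
          have h3 : lev (q (n + N1)).1 + 3 = (lev (q (n + N1)).1 + 1) + 2 := by omega
          rw [h3, pow_add] at h1
          have h4 : (((1 : ℝ) / 2) ^ 2 : ℝ) = 1 / 4 := by norm_num
          rw [h4] at h1
          nlinarith
        have hApos : ∀ n, 0 < (A n).1 := by
          intro n
          have h1 := (hSsub _ (hA1 n)).2.1
          have h2 : (0 : ℝ) < ((1 : ℝ) / 2) ^ (lev (q (n + N1)).1 + 1) := by positivity
          linarith
        have hdfst : ∀ n, |(A n).1 - (q (n + N1)).1| ≤ (q (n + N1)).1 / 4 := by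
          intro n
          have h1 : dist ((A n).1) ((q (n + N1)).1) ≤ dist (A n) (q (n + N1)) := by
            rw [Prod.dist_eq]; exact le_sup_left
          rw [dist_comm (A n) (q (n + N1))] at h1
          have h2 := le_trans h1 (hA3 n)
          rwa [Real.dist_eq] at h2
        have hdsnd : ∀ n, ‖(A n).2 - (q (n + N1)).2‖ ≤ (q (n + N1)).1 / 4 := by
          intro n
          have h1 : dist ((A n).2) ((q (n + N1)).2) ≤ dist (A n) (q (n + N1)) := by
            rw [Prod.dist_eq]; exact le_sup_right
          rw [dist_comm (A n) (q (n + N1))] at h1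
          have h2 := le_trans h1 (hA3 n)
          rwa [dist_eq_norm] at h2
        refine ⟨2 * C + 1, by linarith, A, ?_, ?_, ?_, ?_⟩
        · intro n
          obtain ⟨n', hn'⟩ := hWmem_of_S _ _ (hA1 n)
          exact ⟨n', hn'⟩
        · apply squeeze_zero (fun n => (hApos n).le) (g := fun n => 2 * (q (n + N1)).1)
          · intro n
            have h1 := hdfst n
            have h2 := abs_le.mp h1
            linarith [(hqpos (n + N1)).le]
          · have h3 := (hqt.comp (tendsto_add_atTop_nat N1)).const_mul (2 : ℝ)
            simpa using h3
        · rw [tendsto_iff_dist_tendsto_zero]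
          apply squeeze_zero (fun n => dist_nonneg)
            (g := fun n => (q (n + N1)).1 / 4 + dist ((q (n + N1)).2) x)
          · intro n
            have h1 := hdsnd n
            have h2 : dist ((A n).2) x ≤ dist ((A n).2) ((q (n + N1)).2) +
                dist ((q (n + N1)).2) x := dist_triangle _ _ _
            rw [dist_eq_norm] at h2 ⊢
            rw [← dist_eq_norm] at h1
            linarith
          · have h3 : Tendsto (fun n => (q (n + N1)).1 / 4) atTop (𝓝 0) := by
              have h4 := (hqt.comp (tendsto_add_atTop_nat N1)).const_mul ((1 : ℝ) / 4)
              simp only [mul_zero] at h4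
              have h5 : (fun n : ℕ => (q (n + N1)).1 / 4) =
                  (fun n : ℕ => (1 : ℝ) / 4 * ((fun k => (q k).1) ∘ fun a => a + N1) n) := by
                funext n
                simp only [Function.comp]
                ring
              rw [h5]
              exact h4
            have h5 : Tendsto (fun n => dist ((q (n + N1)).2) x) atTop (𝓝 0) := by
              rw [← tendsto_iff_dist_tendsto_zero]
              exact hqv.comp (tendsto_add_atTop_nat N1)
            simpa using h3.add h5
        · intro n
          have h1 := hdsnd n
          have h2 := hqb (n + N1)
          have h3 : ‖(A n).2 - x‖ ≤ ‖(A n).2 - (q (n + N1)).2‖ + ‖(q (n + N1)).2 - x‖ := by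
            have h4 := norm_add_le ((A n).2 - (q (n + N1)).2) ((q (n + N1)).2 - x)
            rwa [sub_add_sub_cancel] at h4
          have h5 := abs_le.mp (hdfst n)
          have h6 := hqpos (n + N1)
          nlinarith [hApos n]
      -- the conical limit set of the range is contained in E
      have hEsup : conicalLimitSet (Set.range W) ⊆ E := by
        rintro x ⟨C, hC, q, hqm, hqt, hqv, hqb⟩
        choose pos hpos using hqm
        obtain ⟨L0, hL0⟩ := Metric.tendsto_atTop.mp hqv 1 one_pos
        have hvb : ∀ l, L0 ≤ l → ‖(q l).2‖ < ‖x‖ + 1 := by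
          intro l hl
          have h1 := hL0 l hl
          rw [dist_eq_norm] at h1
          have h2 := norm_sub_norm_le (q l).2 x
          linarith
        set Z := Nat.ceil (‖x‖ + 1) with hZ
        have hZle : (‖x‖ + 1 : ℝ) ≤ (Z : ℝ) := Nat.le_ceil _
        set cls1 : Set ℕ :=
          {l | ∃ r, pos l = 2 * r ∧ (Nat.unpair r).2 < (Ls (Nat.unpair r).1).length} with hcls1
        set cls2 : Set ℕ :=
          {l | ∃ r, pos l = 2 * r ∧ ¬((Nat.unpair r).2 < (Ls (Nat.unpair r).1).length)} with hcls2
        set cls3 : Set ℕ := {l | ∃ r, pos l = 2 * r + 1 ∧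
          ∃ z, z ∈ Metric.closedBall (d (Nat.unpair r).1) (((1 : ℝ) / 2) ^ r) ∧ z ∉ F} with hcls3
        set cls4 : Set ℕ := {l | ∃ r, pos l = 2 * r + 1 ∧
          ¬(∃ z, z ∈ Metric.closedBall (d (Nat.unpair r).1) (((1 : ℝ) / 2) ^ r) ∧ z ∉ F)}
          with hcls4
        have hcover : ∀ l, l ∈ cls1 ∪ cls2 ∪ cls3 ∪ cls4 := by
          intro l
          rcases Nat.even_or_odd (pos l) with ⟨r, hr⟩ | ⟨r, hr⟩
          · have hr2 : pos l = 2 * r := by omega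
            by_cases h : (Nat.unpair r).2 < (Ls (Nat.unpair r).1).length
            · exact Or.inl (Or.inl (Or.inl ⟨r, hr2, h⟩))
            · exact Or.inl (Or.inl (Or.inr ⟨r, hr2, h⟩))
          · by_cases h : ∃ z,
                z ∈ Metric.closedBall (d (Nat.unpair r).1) (((1 : ℝ) / 2) ^ r) ∧ z ∉ F
            · exact Or.inl (Or.inr ⟨r, hr, h⟩)
            · exact Or.inr ⟨r, hr, h⟩
        have hinf : cls1.Infinite ∨ cls2.Infinite ∨ cls3.Infinite ∨ cls4.Infinite := by
          by_contra hc
          push_neg at hc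
          obtain ⟨h1, h2, h3, h4⟩ := hc
          have h5 : (Set.univ : Set ℕ).Finite := by
            apply Set.Finite.subset (((h1.union h2).union h3).union h4)
            intro l _
            exact hcover l
          exact Set.infinite_univ h5
        rcases hinf with hc | hc | hc | hc
        · -- real points of E₀: conical witness inside E₀
          set ψ := Nat.nth (· ∈ cls1) with hψ
          have hψm : ∀ k, ψ k ∈ cls1 := fun k => Nat.nth_mem_of_infinite hc k
          have hψs : StrictMono ψ := Nat.nth_strictMono hc
          rw [← hE₀]
          refine ⟨C, hC, fun k => q (ψ k), ?_, hqt.comp hψs.tendsto_atTop,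
            hqv.comp hψs.tendsto_atTop, fun k => hqb (ψ k)⟩
          intro k
          obtain ⟨r, hr, hreal⟩ := hψm k
          have h1 : W (pos (ψ k)) = q (ψ k) := hpos (ψ k)
          rw [hr, hW_def, wSeq_even] at h1
          show q (ψ k) ∈ E₀
          rw [← h1]
          exact ((hBreal r hreal).2).1
        · -- junk points of the B-part: impossible
          exfalso
          set ψ := Nat.nth (· ∈ cls2) with hψ
          have hψm : ∀ k, ψ k ∈ cls2 := fun k => Nat.nth_mem_of_infinite hc k
          have hψs : StrictMono ψ := Nat.nth_strictMono hc
          have hsh : StrictMono (fun k : ℕ => ψ (k + L0)) :=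
            hψs.comp (fun a b hab => by omega)
          apply finite_values_false (fun k => q (ψ (k + L0))) (W '' (Set.Iic (2 * (Z * Z))))
            ((Set.finite_Iic _).image _) ?_ ?_ (hqt.comp hsh.tendsto_atTop)
          · intro k
            obtain ⟨r, hr, hjunk⟩ := hψm (k + L0)
            have h1 : W (pos (ψ (k + L0))) = q (ψ (k + L0)) := hpos _
            refine ⟨pos (ψ (k + L0)), ?_, h1⟩
            simp only [Set.mem_Iic]
            rw [hr]
            have h2 : q (ψ (k + L0)) =
                ((1 : ℝ) / (r + 1), ((Nat.unpair r).1 + (Nat.unpair r).2 + 1) • u) := by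
              rw [← h1, hr, hW_def, wSeq_even, hBjunk r hjunk]
            have h3 : ‖(q (ψ (k + L0))).2‖ < ‖x‖ + 1 :=
              hvb _ (le_trans (by omega) hψs.le_apply)
            rw [h2] at h3
            have h4 : ‖(((Nat.unpair r).1 + (Nat.unpair r).2 + 1) • u :
                EuclideanSpace ℝ (Fin m))‖ = (((Nat.unpair r).1 + (Nat.unpair r).2 + 1 : ℕ) : ℝ) :=
              hnseq _
            have h5 : (((Nat.unpair r).1 + (Nat.unpair r).2 + 1 : ℕ) : ℝ) < (Z : ℝ) := by
              simp only at h3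
              rw [h4] at h3
              linarith
            have h6 : (Nat.unpair r).1 + (Nat.unpair r).2 + 1 ≤ Z := by
              have := lt_of_lt_of_le h5 (le_refl _)
              exact_mod_cast this.le
            have h7 := pair_le_sq (Nat.unpair r).1 (Nat.unpair r).2
            rw [Nat.pair_unpair] at h7
            have h8 : r ≤ Z * Z := le_trans h7 (Nat.mul_le_mul h6 h6)
            omega
          · rintro p ⟨n, -, rfl⟩
            exact hWpos n
        · -- spoke points of the F-part: impossible
          exfalso
          set ψ := Nat.nth (· ∈ cls3) with hψ
          have hψm : ∀ k, ψ k ∈ cls3 := fun k => Nat.nth_mem_of_infinite hc k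
          have hψs : StrictMono ψ := Nat.nth_strictMono hc
          have hval0 : ∀ k, ∃ r, pos (ψ k) = 2 * r + 1 ∧
              ∃ z, z ∈ Metric.closedBall (d (Nat.unpair r).1) (((1 : ℝ) / 2) ^ r) ∧ z ∉ F :=
            fun k => hψm k
          choose rad hrad hex3 using hval0
          have hqval : ∀ k, q (ψ k) = (min (((1 : ℝ) / 2) ^ (rad k))
              (((1 : ℝ) / 4) ^ (rad k) * Metric.infDist (hex3 k).choose F), (hex3 k).choose) := by
            intro k
            rw [← hpos (ψ k), hrad k, hW_def, wSeq_odd, hFspoke (rad k) (hex3 k)]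
          have hrub : ∀ K L : ℕ, ∃ k, L ≤ k ∧ K ≤ rad k := by
            intro K L
            by_contra hcon
            push_neg at hcon
            have hsh : StrictMono (fun k : ℕ => ψ (k + L)) :=
              hψs.comp (fun a b hab => by omega)
            apply finite_values_false (fun k => q (ψ (k + L))) (W '' (Set.Iic (2 * K + 1)))
              ((Set.finite_Iic _).image _) ?_ ?_ (hqt.comp hsh.tendsto_atTop)
            · intro k
              have h1 := hcon (k + L) (by omega)
              refine ⟨pos (ψ (k + L)), ?_, hpos _⟩
              simp only [Set.mem_Iic]
              rw [hrad (k + L)]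
              omega
            · rintro p ⟨n, -, rfl⟩
              exact hWpos n
          have hqψpos : ∀ k, 0 < (q (ψ k)).1 := by
            intro k
            rw [← hpos (ψ k)]
            exact hWpos _
          -- x belongs to F
          have hxF : x ∈ F := by
            rw [IsClosed.mem_iff_infDist_zero hFc hFne]
            by_contra hne0
            have hpos0 : 0 < Metric.infDist x F :=
              lt_of_le_of_ne (Metric.infDist_nonneg) (Ne.symm hne0)
            obtain ⟨K, hK⟩ := pow_small (half_pos hpos0)
            obtain ⟨LL, hLL⟩ := Metric.tendsto_atTop.mp (hqv.comp hψs.tendsto_atTop)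
              (Metric.infDist x F / 2) (half_pos hpos0)
            obtain ⟨k, hkL, hkK⟩ := hrub K LL
            have h1 : dist x ((q (ψ k)).2) < Metric.infDist x F / 2 := by
              have := hLL k hkL
              rw [dist_comm]
              exact this
            have h2 : (q (ψ k)).2 = (hex3 k).choose := by rw [hqval k]
            have h3 := (hex3 k).choose_spec.1
            rw [Metric.mem_closedBall] at h3
            have h4 : Metric.infDist x F ≤ dist x (d (Nat.unpair (rad k)).1) :=
              Metric.infDist_le_dist_of_mem (hdF _)
            have h5 : dist x (d (Nat.unpair (rad k)).1) ≤ dist x ((q (ψ k)).2) +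
                dist ((q (ψ k)).2) (d (Nat.unpair (rad k)).1) := dist_triangle _ _ _
            have h6 := hK (rad k) hkK
            rw [h2] at h1 h5
            linarith
          obtain ⟨K2, hK2⟩ := pow_unbounded_of_one_lt C (by norm_num : (1 : ℝ) < 4)
          obtain ⟨k, -, hkK2⟩ := hrub K2 0
          have hz2 := (hex3 k).choose_spec.2
          have hzpos : 0 < Metric.infDist (hex3 k).choose F := hinfpos _ hz2
          have ht1 : (q (ψ k)).1 ≤ ((1 : ℝ) / 4) ^ (rad k) *
              Metric.infDist (hex3 k).choose F := by
            rw [hqval k]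
            exact min_le_right _ _
          have ht0 : 0 < (q (ψ k)).1 := hqψpos k
          have hb := hqb (ψ k)
          have h8 : Metric.infDist (hex3 k).choose F ≤ ‖(q (ψ k)).2 - x‖ := by
            have h9 : (q (ψ k)).2 = (hex3 k).choose := by rw [hqval k]
            rw [h9, ← dist_eq_norm]
            exact Metric.infDist_le_dist_of_mem hxF
          have e1 : Metric.infDist (hex3 k).choose F ≤
              C * (((1 : ℝ) / 4) ^ (rad k) * Metric.infDist (hex3 k).choose F) :=
            le_trans (le_trans h8 hb) (mul_le_mul_of_nonneg_left ht1 hC.le)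
          have e2 : 1 ≤ C * ((1 : ℝ) / 4) ^ (rad k) := by nlinarith
          have h11 : ((1 : ℝ) / 4) ^ (rad k) * (4 : ℝ) ^ (rad k) = 1 := by
            rw [one_div, inv_pow, inv_mul_cancel₀ (by positivity)]
          have h10 : (4 : ℝ) ^ K2 ≤ (4 : ℝ) ^ (rad k) :=
            pow_le_pow_right₀ (by norm_num) hkK2
          have e3 : (4 : ℝ) ^ (rad k) ≤ C := by nlinarith [pow_pos (by norm_num : (0:ℝ) < 4) (rad k)]
          linarith
        · -- junk points of the F-part: impossible
          exfalso
          set ψ := Nat.nth (· ∈ cls4) with hψ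
          have hψm : ∀ k, ψ k ∈ cls4 := fun k => Nat.nth_mem_of_infinite hc k
          have hψs : StrictMono ψ := Nat.nth_strictMono hc
          have hsh : StrictMono (fun k : ℕ => ψ (k + L0)) :=
            hψs.comp (fun a b hab => by omega)
          apply finite_values_false (fun k => q (ψ (k + L0))) (W '' (Set.Iic (2 * Z + 1)))
            ((Set.finite_Iic _).image _) ?_ ?_ (hqt.comp hsh.tendsto_atTop)
          · intro k
            obtain ⟨r, hr, hjunk⟩ := hψm (k + L0)
            have h1 : W (pos (ψ (k + L0))) = q (ψ (k + L0)) := hpos _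
            refine ⟨pos (ψ (k + L0)), ?_, h1⟩
            simp only [Set.mem_Iic]
            rw [hr]
            have h2 : q (ψ (k + L0)) = (((1 : ℝ) / 2) ^ r, (r + 1) • u) := by
              rw [← h1, hr, hW_def, wSeq_odd, hFjunk r hjunk]
            have h3 : ‖(q (ψ (k + L0))).2‖ < ‖x‖ + 1 :=
              hvb _ (le_trans (by omega) hψs.le_apply)
            rw [h2] at h3
            have h4 : ‖((r + 1) • u : EuclideanSpace ℝ (Fin m))‖ = ((r + 1 : ℕ) : ℝ) := hnseq _
            have h5 : ((r + 1 : ℕ) : ℝ) < (Z : ℝ) := by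
              simp only at h3
              rw [h4] at h3
              linarith
            have h6 : r + 1 ≤ Z := by exact_mod_cast h5.le
            omega
          · rintro p ⟨n, -, rfl⟩
            exact hWpos n
      -- F equals the set of subsequential limits
      have hFeq : F = {x | ∃ φ : ℕ → ℕ, StrictMono φ ∧
          Tendsto (fun k => (W (φ k)).2) atTop (𝓝 x)} := by
        ext x
        rw [Set.mem_setOf_eq, freq_char]
        constructor
        · intro hxF ε hε N
          obtain ⟨j, hj⟩ := hdense x hxF (ε / 4) (by positivity)
          obtain ⟨K, hK⟩ := pow_small (show (0 : ℝ) < ε / 4 by positivity)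
          set r := Nat.pair j (max N K) with hr
          have hrN : N ≤ r := le_trans (le_max_left _ _) (Nat.right_le_pair _ _)
          have hrK : K ≤ r := le_trans (le_max_right _ _) (Nat.right_le_pair _ _)
          have hJ : (Nat.unpair r).1 = j := by rw [hr, Nat.unpair_pair]
          by_cases hz : ∃ z,
              z ∈ Metric.closedBall (d (Nat.unpair r).1) (((1 : ℝ) / 2) ^ r) ∧ z ∉ F
          · refine ⟨2 * r + 1, by omega, ?_⟩
            rw [hW_def, wSeq_odd, hFspoke r hz]
            show dist (hz.choose) x < ε
            have h1 := hz.choose_spec.1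
            rw [Metric.mem_closedBall] at h1
            have h2 := hK r hrK
            have hj' : dist x (d (Nat.unpair r).1) < ε / 4 := by rw [hJ]; exact hj
            calc dist (hz.choose) x ≤ dist hz.choose (d (Nat.unpair r).1) +
                dist (d (Nat.unpair r).1) x := dist_triangle _ _ _
              _ < ε / 4 + ε / 4 := by
                  have h3 : dist (d (Nat.unpair r).1) x < ε / 4 := by rwa [dist_comm]
                  exact add_lt_add (lt_of_le_of_lt h1 h2) h3
              _ < ε := by linarith
          · push_neg at hz
            rw [hJ] at hz
            have hdint : d j ∈ closure E := by
              apply hint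
              rw [mem_interior_iff_mem_nhds, Metric.mem_nhds_iff]
              exact ⟨((1 : ℝ) / 2) ^ r, by positivity,
                fun y hy => hz y (Metric.ball_subset_closedBall hy)⟩
            obtain ⟨e, heE, hede⟩ := Metric.mem_closure_iff.mp hdint (ε / 4) (by positivity)
            obtain ⟨C', hC', q, hqm, hqt, hqv, hqb⟩ := hEsub heE
            obtain ⟨n, hnN, hnd⟩ := witness_freq W hWpos e q hqm hqt hqv (ε / 4)
              (by positivity) N
            refine ⟨n, hnN, ?_⟩
            calc dist ((W n).2) x ≤ dist ((W n).2) e + dist e (d j) + dist (d j) x :=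
                dist_triangle4 _ _ _ _
              _ < ε / 4 + ε / 4 + ε / 4 := by
                  have h3 : dist e (d j) < ε / 4 := by rwa [dist_comm]
                  have h4 : dist (d j) x < ε / 4 := by rwa [dist_comm]
                  exact add_lt_add (add_lt_add hnd h3) h4
              _ < ε := by linarith
        · intro hfr
          by_contra hxF
          have hρ : 0 < Metric.infDist x F :=
            lt_of_le_of_ne Metric.infDist_nonneg
              (fun h => hxF ((IsClosed.mem_iff_infDist_zero hFc hFne).mpr h.symm))
          set ρ := Metric.infDist x F with hρdef
          obtain ⟨K1, hK1⟩ := pow_small (half_pos hρ)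
          obtain ⟨K2, hK2⟩ := pow_small (show (0 : ℝ) < (ρ / 2) ^ 2 by positivity)
          set M2 := (Finset.range K2).sup (fun j => (Ls j).length) with hM2
          set Z := Nat.ceil (‖x‖ + 1) with hZ
          have hZle : (‖x‖ + 1 : ℝ) ≤ (Z : ℝ) := Nat.le_ceil _
          set Nb := 2 * ((K2 + M2 + 1) * (K2 + M2 + 1)) + 2 * (Z * Z) + 2 * K1 + 2 * Z + 4
            with hNb
          obtain ⟨n, hnN, hnd⟩ := hfr (min (ρ / 2) 1) (by positivity) (Nb + 1)
          have hd1 : dist ((W n).2) x < ρ / 2 := lt_of_lt_of_le hnd (min_le_left _ _)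
          have hd2 : dist ((W n).2) x < 1 := lt_of_lt_of_le hnd (min_le_right _ _)
          have hvn : ‖(W n).2‖ < ‖x‖ + 1 := by
            rw [dist_eq_norm] at hd2
            have h2 := norm_sub_norm_le (W n).2 x
            linarith
          have hnb : n ≤ Nb := by
            rcases Nat.even_or_odd n with ⟨r, hrr⟩ | ⟨r, hrr⟩
            · have hn2 : n = 2 * r := by omega
              have hWn : W n = bSeq Ls u r := by rw [hn2, hW_def, wSeq_even]
              by_cases hb : (Nat.unpair r).2 < (Ls (Nat.unpair r).1).length
              · obtain ⟨-, -, ht3, -, e, heE, hee⟩ := (hBreal r hb).2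
                have h1 : ρ ≤ dist x e := Metric.infDist_le_dist_of_mem (hEF heE)
                have h2 : dist x e ≤ dist x ((W n).2) + dist ((W n).2) e := dist_triangle _ _ _
                have h3 : dist ((W n).2) e ≤ Real.sqrt ((bSeq Ls u r).1) := by
                  rw [hWn, dist_eq_norm]
                  exact hee
                have hjK2 : (Nat.unpair r).1 < K2 := by
                  by_contra hcc
                  push_neg at hcc
                  have h4 : (bSeq Ls u r).1 < ((1 : ℝ) / 2) ^ K2 :=
                    lt_of_lt_of_le ht3 (pow_le_pow_of_le_one (by norm_num) (by norm_num) hcc)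
                  have h5 : Real.sqrt ((bSeq Ls u r).1) ≤ ρ / 2 := by
                    have h6 : (bSeq Ls u r).1 < (ρ / 2) ^ 2 := lt_trans h4 (hK2 K2 le_rfl)
                    calc Real.sqrt ((bSeq Ls u r).1) ≤ Real.sqrt ((ρ / 2) ^ 2) :=
                        Real.sqrt_le_sqrt h6.le
                      _ = ρ / 2 := Real.sqrt_sq (by positivity)
                  have h7 : dist x ((W n).2) < ρ / 2 := by rwa [dist_comm]
                  linarith
                have hi : (Nat.unpair r).2 < M2 + 1 := by
                  have h5 : (Ls (Nat.unpair r).1).length ≤ M2 :=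
                    Finset.le_sup (f := fun j => (Ls j).length) (Finset.mem_range.mpr hjK2)
                  omega
                have h6 := pair_le_sq (Nat.unpair r).1 (Nat.unpair r).2
                rw [Nat.pair_unpair] at h6
                have h7 : r ≤ (K2 + M2 + 1) * (K2 + M2 + 1) :=
                  le_trans h6 (Nat.mul_le_mul (by omega) (by omega))
                omega
              · have h2 : (W n).2 = (((Nat.unpair r).1 + (Nat.unpair r).2 + 1) • u :
                    EuclideanSpace ℝ (Fin m)) := by
                  rw [hWn, hBjunk r hb]
                rw [h2, hnseq] at hvn
                have h6 : (Nat.unpair r).1 + (Nat.unpair r).2 + 1 ≤ Z := by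
                  have h5 : (((Nat.unpair r).1 + (Nat.unpair r).2 + 1 : ℕ) : ℝ) < (Z : ℝ) := by
                    linarith
                  exact_mod_cast h5.le
                have h7 := pair_le_sq (Nat.unpair r).1 (Nat.unpair r).2
                rw [Nat.pair_unpair] at h7
                have h8 : r ≤ Z * Z := le_trans h7 (Nat.mul_le_mul h6 h6)
                omega
            · have hWn : W n = fSeq d F u r := by rw [hrr, hW_def, wSeq_odd]
              by_cases hzz : ∃ z,
                  z ∈ Metric.closedBall (d (Nat.unpair r).1) (((1 : ℝ) / 2) ^ r) ∧ z ∉ F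
              · have h2 : (W n).2 = hzz.choose := by rw [hWn, hFspoke r hzz]
                have h3 := hzz.choose_spec.1
                rw [Metric.mem_closedBall] at h3
                have h4 : ρ ≤ dist x (d (Nat.unpair r).1) :=
                  Metric.infDist_le_dist_of_mem (hdF _)
                have h5 : dist x (d (Nat.unpair r).1) ≤ dist x ((W n).2) +
                    dist ((W n).2) (d (Nat.unpair r).1) := dist_triangle _ _ _
                have h6 : dist ((W n).2) (d (Nat.unpair r).1) ≤ ((1 : ℝ) / 2) ^ r := by
                  rw [h2]; exact h3
                have h7 : dist x ((W n).2) < ρ / 2 := by rwa [dist_comm]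
                have hrK1 : r < K1 := by
                  by_contra hcc
                  push_neg at hcc
                  have h8 := hK1 r hcc
                  linarith
                omega
              · have h2 : (W n).2 = ((r + 1) • u : EuclideanSpace ℝ (Fin m)) := by
                  rw [hWn, hFjunk r hzz]
                rw [h2, hnseq] at hvn
                have h6 : r + 1 ≤ Z := by
                  have h5 : ((r + 1 : ℕ) : ℝ) < (Z : ℝ) := by linarith
                  exact_mod_cast h5.le
                omega
          omega
      exact ⟨W, hWpos, hWt, hFeq, Set.Subset.antisymm hEsub hEsup⟩
  · rintro ⟨w, h1, h2, hF, hE⟩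
    have hL : ∀ x ∈ F, ∀ ε > 0, ∀ N : ℕ, ∃ n, N ≤ n ∧ dist ((w n).2) x < ε := by
      intro x hx
      rw [hF] at hx
      exact (freq_char w x).mp hx
    have hLmem : ∀ x, (∀ ε > 0, ∀ N : ℕ, ∃ n, N ≤ n ∧ dist ((w n).2) x < ε) → x ∈ F := by
      intro x hx
      rw [hF]
      exact (freq_char w x).mpr hx
    have hFclosed : IsClosed F := by
      apply isClosed_of_closure_subset
      intro y hy
      apply hLmem
      intro ε hε N
      obtain ⟨z, hzF, hzy⟩ := Metric.mem_closure_iff.mp hy (ε / 2) (by positivity)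
      obtain ⟨n, hn, hd⟩ := hL z hzF (ε / 2) (by positivity) N
      refine ⟨n, hn, ?_⟩
      have := dist_triangle ((w n).2) z y
      have h3 : dist z y = dist y z := dist_comm _ _
      linarith
    have hEFsub : E ⊆ F := by
      intro x hx
      rw [hE] at hx
      obtain ⟨C, hC, q, hqmem, hqt, hqv, hqb⟩ := hx
      exact hLmem x (witness_freq w h1 x q hqmem hqt hqv)
    refine ⟨⟨Set.range w, ?_, hE.symm⟩, hFclosed, hEFsub, ?_⟩
    · rintro p ⟨n, rfl⟩
      exact h1 n
    -- interior F ⊆ closure E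
    intro x hx
    have hxF : x ∈ F := interior_subset hx
    obtain ⟨ε, hε, hball⟩ := Metric.mem_nhds_iff.mp (mem_interior_iff_mem_nhds.mp hx)
    rw [Metric.mem_closure_iff]
    intro δ hδ
    set ρ := min δ ε with hρ
    have hρpos : 0 < ρ := lt_min hδ hε
    have key : ∀ y ∈ F, ∀ η > 0, ∀ N : ℕ, ∃ n, N ≤ n ∧ dist ((w n).2) y < η ∧ (w n).1 < η := by
      intro y hy η hη N
      obtain ⟨Nt, hNt⟩ := Metric.tendsto_atTop.mp h2 η hη
      obtain ⟨n, hn, hd⟩ := hL y hy η hη (max N Nt)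
      refine ⟨n, le_trans (le_max_left _ _) hn, hd, ?_⟩
      have := hNt n (le_trans (le_max_right _ _) hn)
      rw [Real.dist_eq, sub_zero] at this
      exact lt_of_le_of_lt (le_abs_self _) this
    set Q : ℕ → Prop := fun n => dist ((w n).2) x + (w n).1 < ρ / 2 with hQdef
    have hstep : ∀ n, Q n →
        ∃ n', n < n' ∧ (w n').1 ≤ (w n).1 / 2 ∧ dist ((w n').2) ((w n).2) ≤ (w n).1 / 2 ∧ Q n' := by
      intro n hQn
      have htpos := h1 n
      have hQn' : dist ((w n).2) x + (w n).1 < ρ / 2 := hQn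
      have hvF : (w n).2 ∈ F := by
        apply hball
        rw [Metric.mem_ball]
        have : ρ ≤ ε := min_le_right _ _
        linarith
      obtain ⟨n', hn', hd', ht'⟩ :=
        key ((w n).2) hvF ((w n).1 / 2) (by positivity) (n + 1)
      refine ⟨n', by omega, ht'.le, hd'.le, ?_⟩
      show dist ((w n').2) x + (w n').1 < ρ / 2
      have htri := dist_triangle ((w n').2) ((w n).2) x
      linarith
    obtain ⟨n₀, _, hd0, ht0⟩ := key x hxF (ρ / 8) (by positivity) 0
    have hQ0 : Q n₀ := by
      show dist ((w n₀).2) x + (w n₀).1 < ρ / 2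
      linarith
    let g : ℕ → {n : ℕ // Q n} := fun k =>
      Nat.rec ⟨n₀, hQ0⟩ (fun _ p => ⟨(hstep p.1 p.2).choose, (hstep p.1 p.2).choose_spec.2.2.2⟩) k
    have hgs : ∀ k, (g (k + 1)).1 = (hstep (g k).1 (g k).2).choose := fun k => rfl
    set tt : ℕ → ℝ := fun k => (w (g k).1).1 with htt
    set vv : ℕ → EuclideanSpace ℝ (Fin m) := fun k => (w (g k).1).2 with hvv
    have httpos : ∀ k, 0 < tt k := fun k => h1 _
    have hgt : ∀ k, tt (k + 1) ≤ tt k / 2 := by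
      intro k
      have := (hstep (g k).1 (g k).2).choose_spec.2.1
      rw [← hgs k] at this
      exact this
    have hgd : ∀ k, dist (vv (k + 1)) (vv k) ≤ tt k / 2 := by
      intro k
      have := (hstep (g k).1 (g k).2).choose_spec.2.2.1
      rw [← hgs k] at this
      exact this
    have hdecay : ∀ k l, tt (k + l) ≤ tt k * (1 / 2) ^ l := by
      intro k l
      induction l with
      | zero => simp
      | succ l ih =>
        have h3 := hgt (k + l)
        have : tt (k + (l + 1)) = tt (k + l + 1) := by ring_nf
        rw [this]
        calc tt (k + l + 1) ≤ tt (k + l) / 2 := h3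
          _ ≤ tt k * (1 / 2) ^ l / 2 := by linarith
          _ = tt k * (1 / 2) ^ (l + 1) := by ring
    have hcauchy : CauchySeq vv := by
      apply cauchySeq_of_le_geometric (1 / 2) (tt 0 / 2) (by norm_num)
      intro k
      have h3 := hgd k
      have h4 := hdecay 0 k
      rw [dist_comm] at h3
      simp only [Nat.zero_add] at h4
      calc dist (vv k) (vv (k + 1)) ≤ tt k / 2 := h3
        _ ≤ tt 0 * (1 / 2) ^ k / 2 := by linarith
        _ = tt 0 / 2 * (1 / 2) ^ k := by ring
    obtain ⟨y, hy⟩ := cauchySeq_tendsto_of_complete hcauchy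
    have hbound : ∀ k l, dist (vv k) (vv (k + l)) ≤ tt k * (1 - (1 / 2) ^ l) := by
      intro k l
      induction l with
      | zero => simp
      | succ l ih =>
        have h3 := hgd (k + l)
        have h4 := hdecay k l
        have htri := dist_triangle (vv k) (vv (k + l)) (vv (k + l + 1))
        rw [dist_comm] at h3
        have : k + (l + 1) = k + l + 1 := by ring
        rw [this]
        calc dist (vv k) (vv (k + l + 1)) ≤ dist (vv k) (vv (k + l)) + dist (vv (k + l)) (vv (k + l + 1)) := htri
          _ ≤ tt k * (1 - (1 / 2) ^ l) + tt (k + l) / 2 := by linarith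
          _ ≤ tt k * (1 - (1 / 2) ^ l) + tt k * (1 / 2) ^ l / 2 := by linarith
          _ = tt k * (1 - (1 / 2) ^ (l + 1)) := by ring
    have hdisty : ∀ k, dist (vv k) y ≤ tt k := by
      intro k
      have hmo : StrictMono (fun l : ℕ => k + l) := fun a b h => by simpa using Nat.add_lt_add_left h k
      have h5 : Tendsto (fun l => vv (k + l)) atTop (𝓝 y) := hy.comp hmo.tendsto_atTop
      have h6 : Tendsto (fun l => dist (vv k) (vv (k + l))) atTop (𝓝 (dist (vv k) y)) :=
        Filter.Tendsto.dist tendsto_const_nhds h5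
      apply le_of_tendsto h6
      apply Filter.Eventually.of_forall
      intro l
      have h7 := hbound k l
      have h8 : (0:ℝ) < (1/2)^l := by positivity
      nlinarith [httpos k]
    have httz : Tendsto tt atTop (𝓝 0) := by
      apply squeeze_zero (fun k => (httpos k).le) (g := fun k => tt 0 * (1 / 2) ^ k)
      · intro k
        have := hdecay 0 k
        simpa using this
      · have := (tendsto_pow_atTop_nhds_zero_of_lt_one (by norm_num : (0:ℝ) ≤ 1/2)
          (by norm_num : (1:ℝ)/2 < 1)).const_mul (tt 0)
        simpa using this
    have hyE : y ∈ E := by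
      rw [hE]
      refine ⟨1, one_pos, fun k => w (g k).1, fun k => ⟨(g k).1, rfl⟩, httz, hy, ?_⟩
      intro k
      rw [← dist_eq_norm]
      simpa using hdisty k
    refine ⟨y, hyE, ?_⟩
    have h9 : dist x y ≤ dist x (vv 0) + dist (vv 0) y := dist_triangle _ _ _
    have h10 : dist x (vv 0) = dist (vv 0) x := dist_comm _ _
    have h11 := hdisty 0
    have h12 : tt 0 < ρ / 8 := ht0
    have h13 : dist (vv 0) x < ρ / 8 := hd0
    have : ρ ≤ δ := min_le_left _ _
    linarith
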